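/- arXiv:2401.16953 — 5 statements merged into one kernel-verified Lean document; each statement's English description precedes it below -/
import Mathlib

section
/- For all real numbers a, b, exponents p > 1 and β ≥ 1, setting C(β,p) = (p/(β+p-1))^p, one has |a-b|^{p-2}(a-b)·((a⁺)^β - (b⁺)^β) ≥ C(β,p)·|(a⁺)^{(β+p-1)/p} - (b⁺)^{(β+p-1)/p}|^p, where a⁺ = max{a,0}. -/
/-!
With `γ = (β + p - 1) / p = r + 1`, `r = (β - 1) / p`, one has
`x ^ γ - y ^ γ = γ ∫_y^x t ^ r` for `0 ≤ y ≤ x`. Jensen's inequality for `s ↦ s ^ p` on `[y, x]`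
bounds `(∫_y^x t ^ r) ^ p` by
`(x - y) ^ (p - 1) ∫_y^x t ^ (β - 1) = (x - y) ^ (p - 1) (x ^ β - y ^ β) / β`, and `β ≥ 1`.
For arbitrary reals, `t ↦ max t 0` is monotone and `1`-Lipschitz, so `a - b` dominates
`max a 0 - max b 0` when `b ≤ a`; the case `a ≤ b` follows by symmetry.
-/

open Real Set MeasureTheory intervalIntegral

theorem rpow_intervalIntegral_le_mul_intervalIntegral_rpow {f : ℝ → ℝ} {a b p : ℝ}
    (hab : a ≤ b) (hp : 1 ≤ p) (hf₀ : ∀ t ∈ Icc a b, 0 ≤ f t)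
    (hf : IntervalIntegrable f volume a b)
    (hfp : IntervalIntegrable (fun t ↦ f t ^ p) volume a b) :
    (∫ t in a..b, f t) ^ p ≤ (b - a) ^ (p - 1) * ∫ t in a..b, f t ^ p := by
  rcases hab.eq_or_lt with rfl | hab
  · simp [zero_rpow (by linarith : p ≠ 0)]
  have hba : 0 < b - a := sub_pos.mpr hab
  have jensen : (⨍ t in a..b, f t) ^ p ≤ ⨍ t in a..b, f t ^ p := by
    refine (convexOn_rpow hp).map_set_average_le (continuousOn_id.rpow_const fun _ _ ↦
      Or.inr (by linarith)) isClosed_Ici ?_ ?_ ?_ hf.def' hfp.def'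
    · simp [uIoc_of_le hab.le, hab]
    · simp [uIoc_of_le hab.le]
    · rw [uIoc_of_le hab.le]
      exact (ae_restrict_iff' measurableSet_Ioc).mpr
        (Filter.Eventually.of_forall fun t ht ↦ hf₀ t (Ioc_subset_Icc_self ht))
  rw [interval_average_eq_div, interval_average_eq_div,
    div_rpow (integral_nonneg hab.le hf₀) hba.le, div_le_div_iff₀ (by positivity) hba] at jensen
  calc (∫ t in a..b, f t) ^ p
      = (∫ t in a..b, f t) ^ p * (b - a) / (b - a) := by field_simp
    _ ≤ (∫ t in a..b, f t ^ p) * (b - a) ^ p / (b - a) := by gcongr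
    _ = (b - a) ^ (p - 1) * ∫ t in a..b, f t ^ p := by
      rw [rpow_sub_one hba.ne']; ring

theorem rpow_sub_rpow_rpow_le {x y p β : ℝ} (hy : 0 ≤ y) (hyx : y ≤ x) (hp : 1 ≤ p)
    (hβ : 1 ≤ β) :
    (p / (β + p - 1)) ^ p * (x ^ ((β + p - 1) / p) - y ^ ((β + p - 1) / p)) ^ p ≤
      (x - y) ^ (p - 1) * (x ^ β - y ^ β) := by
  have hp₀ : 0 < p := by linarith
  have hr₀ : 0 ≤ (β - 1) / p := div_nonneg (by linarith) hp₀.le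
  have hγ : (β + p - 1) / p = (β - 1) / p + 1 := by field_simp; ring
  set r := (β - 1) / p with hr
  have hC : p / (β + p - 1) = (r + 1)⁻¹ := by rw [← hγ, inv_div]
  have hf : Continuous fun t : ℝ ↦ t ^ r := continuous_rpow_const hr₀
  have integral_r : ∫ t in y..x, t ^ r = (x ^ (r + 1) - y ^ (r + 1)) / (r + 1) :=
    integral_rpow (Or.inl (by linarith))
  have integral_rp : ∫ t in y..x, (t ^ r) ^ p = (x ^ β - y ^ β) / β := by
    rw [integral_congr (g := fun t ↦ t ^ (β - 1)) fun t ht ↦ ?_,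
      integral_rpow (Or.inl (by linarith)), sub_add_cancel]
    rw [uIcc_of_le hyx] at ht
    rw [← rpow_mul (hy.trans ht.1), hr, div_mul_cancel₀ _ hp₀.ne']
  have jensen := rpow_intervalIntegral_le_mul_intervalIntegral_rpow hyx hp
    (fun t ht ↦ rpow_nonneg (hy.trans ht.1) r) (hf.intervalIntegrable y x)
    ((hf.rpow_const fun _ ↦ Or.inr hp₀.le).intervalIntegrable y x)
  rw [integral_r, integral_rp] at jensen
  have hxyγ : 0 ≤ x ^ (r + 1) - y ^ (r + 1) := sub_nonneg.mpr (rpow_le_rpow hy hyx (by linarith))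
  have hxyβ : 0 ≤ x ^ β - y ^ β := sub_nonneg.mpr (rpow_le_rpow hy hyx (by linarith))
  rw [hC, hγ, ← mul_rpow (by positivity) hxyγ, inv_mul_eq_div]
  calc _ ≤ (x - y) ^ (p - 1) * ((x ^ β - y ^ β) / β) := jensen
    _ ≤ (x - y) ^ (p - 1) * (x ^ β - y ^ β) := by
      gcongr
      exact div_le_self hxyβ hβ

theorem abs_rpow_sub_two_mul_self {d p : ℝ} (hd : 0 ≤ d) (hp : 1 < p) :
    |d| ^ (p - 2) * d = d ^ (p - 1) := by
  rw [abs_of_nonneg hd, ← rpow_add_one' hd (by linarith)]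
  ring_nf

theorem max_zero_rpow_sub_le_of_le {a b p β : ℝ} (hba : b ≤ a) (hp : 1 < p) (hβ : 1 ≤ β) :
    (p / (β + p - 1)) ^ p *
      |(max a 0) ^ ((β + p - 1) / p) - (max b 0) ^ ((β + p - 1) / p)| ^ p ≤
    |a - b| ^ (p - 2) * (a - b) * ((max a 0) ^ β - (max b 0) ^ β) := by
  have hy : 0 ≤ max b 0 := le_max_right b 0
  have hyx : max b 0 ≤ max a 0 := max_le_max_right 0 hba
  have hxy_le : max a 0 - max b 0 ≤ a - b := by
    simpa [abs_of_nonneg (sub_nonneg.mpr hyx), abs_of_nonneg (sub_nonneg.mpr hba)]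
      using abs_max_sub_max_le_abs a b 0
  rw [abs_of_nonneg (sub_nonneg.mpr (rpow_le_rpow hy hyx (div_nonneg (by linarith) (by linarith)))),
    abs_rpow_sub_two_mul_self (sub_nonneg.mpr hba) hp]
  calc _ ≤ (max a 0 - max b 0) ^ (p - 1) * ((max a 0) ^ β - (max b 0) ^ β) :=
        rpow_sub_rpow_rpow_le hy hyx hp.le hβ
    _ ≤ (a - b) ^ (p - 1) * ((max a 0) ^ β - (max b 0) ^ β) := by
        gcongr
        exact sub_nonneg.mpr (rpow_le_rpow hy hyx (by linarith))

/-- Inequality (i1): for all reals `a b`, `p > 1`, `β ≥ 1`, with `C(β,p) = (p/(β+p-1))^p`,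
`|a-b|^{p-2}(a-b)((a⁺)^β - (b⁺)^β) ≥ C(β,p)|(a⁺)^{(β+p-1)/p} - (b⁺)^{(β+p-1)/p}|^p`. -/
theorem stmt0 (a b p β : ℝ) (hp : 1 < p) (hβ : 1 ≤ β) :
    (p / (β + p - 1)) ^ p *
      |(max a 0) ^ ((β + p - 1) / p) - (max b 0) ^ ((β + p - 1) / p)| ^ p ≤
    |a - b| ^ (p - 2) * (a - b) * ((max a 0) ^ β - (max b 0) ^ β) := by
  rcases le_total b a with hba | hab
  · exact max_zero_rpow_sub_le_of_le hba hp hβ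
  · have h := max_zero_rpow_sub_le_of_le hab hp hβ
    rw [abs_sub_comm b, abs_sub_comm ((max b 0) ^ _)] at h
    linarith
end

section
/- For all real numbers a, b, exponents p > 1, β ≥ 1, and M > 0, setting C(β,p) = (p/(β+p-1))^p and (a⁺)_M = min{max{a,0}, M}, one has |a-b|^{p-2}(a-b)·(((a⁺)_M)^β - ((b⁺)_M)^β) ≥ C(β,p)·|((a⁺)_M)^{(β+p-1)/p} - ((b⁺)_M)^{(β+p-1)/p}|^p. -/
open intervalIntegral MeasureTheory

lemma core {p β x y : ℝ} (hp : 1 < p) (hβ : 1 ≤ β) (hy : 0 ≤ y) (hxy : y < x) :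
    ((x ^ ((β + p - 1) / p) - y ^ ((β + p - 1) / p)) / ((β + p - 1) / p)) ^ p
      ≤ (x - y) ^ (p - 1) * ((x ^ β - y ^ β) / β) := by
  have hp0 : (0:ℝ) < p := by linarith
  have hβ0 : (0:ℝ) < β := by linarith
  set γ : ℝ := (β + p - 1) / p with hγdef
  have hγ1 : 1 ≤ γ := by rw [hγdef, le_div_iff₀ hp0]; linarith
  have hγ0 : 0 < γ := lt_of_lt_of_le zero_lt_one hγ1
  have hγm1 : (γ - 1) * p = β - 1 := by
    rw [hγdef]; field_simp; ring
  have hγm1nn : 0 ≤ γ - 1 := by linarith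
  set q : ℝ := p / (p - 1) with hqdef
  have hpq : p.HolderConjugate q := Real.HolderConjugate.conjExponent hp
  have hq0 : q ≠ 0 := hpq.symm.ne_zero
  have hL : 0 < x - y := by linarith
  have hAform : ∫ t in y..x, t ^ (β - 1) = (x ^ β - y ^ β) / β := by
    rw [integral_rpow (Or.inl (by linarith))]; norm_num
  have hIform : ∫ t in y..x, t ^ (γ - 1) = (x ^ γ - y ^ γ) / γ := by
    rw [integral_rpow (Or.inl (by linarith))]; norm_num
  set A : ℝ := (x ^ β - y ^ β) / β with hAdef
  have hA : 0 < A := by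
    apply div_pos _ hβ0
    have := Real.rpow_lt_rpow hy hxy hβ0
    linarith
  set lam : ℝ := (A / (x - y)) ^ (1 / q) with hlamdef
  have hlam : 0 < lam := Real.rpow_pos_of_pos (div_pos hA hL) _
  have hint1 : IntervalIntegrable (fun t => t ^ (γ - 1)) volume y x :=
    intervalIntegrable_rpow (Or.inl hγm1nn)
  have hint2 : IntervalIntegrable (fun t => t ^ (β - 1)) volume y x :=
    intervalIntegrable_rpow (Or.inl (by linarith))
  -- pointwise Young inequality
  have hpt : ∀ t ∈ Set.Icc y x, (fun t => t ^ (γ - 1) * lam) t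
      ≤ (fun t => t ^ (β - 1) / p + lam ^ q / q) t := by
    intro t ht
    have ht0 : 0 ≤ t := le_trans hy ht.1
    have hyoung := Real.young_inequality_of_nonneg
      (Real.rpow_nonneg ht0 (γ - 1)) hlam.le hpq
    have h1 : (t ^ (γ - 1)) ^ p = t ^ (β - 1) := by
      rw [← Real.rpow_mul ht0, hγm1]
    simpa [h1] using hyoung
  have hInt := intervalIntegral.integral_mono_on hxy.le (hint1.mul_const lam)
    ((hint2.div_const p).add intervalIntegrable_const) hpt
  rw [intervalIntegral.integral_mul_const, hIform,
    intervalIntegral.integral_add (hint2.div_const p) intervalIntegrable_const,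
    intervalIntegral.integral_div, hAform, intervalIntegral.integral_const,
    smul_eq_mul] at hInt
  have hlamq : lam ^ q = A / (x - y) := by
    rw [hlamdef, ← Real.rpow_mul (div_pos hA hL).le, one_div_mul_cancel hq0,
      Real.rpow_one]
  have hIA : (x ^ γ - y ^ γ) / γ * lam ≤ A := by
    have h2 : (x - y) * (lam ^ q / q) = A / q := by
      rw [hlamq]; field_simp
    have h3 : A / p + A / q = A := by
      have := hpq.inv_add_inv_eq_one
      field_simp at this ⊢
      nlinarith [this]
    calc (x ^ γ - y ^ γ) / γ * lam ≤ A / p + (x - y) * (lam ^ q / q) := hInt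
      _ = A / p + A / q := by rw [h2]
      _ = A := h3
  have hI0 : 0 ≤ (x ^ γ - y ^ γ) / γ := by
    apply div_nonneg _ hγ0.le
    have := Real.rpow_le_rpow hy hxy.le hγ0.le
    linarith
  have hIle : (x ^ γ - y ^ γ) / γ ≤ A / lam := (le_div_iff₀ hlam).mpr hIA
  have hlamp : lam ^ p = A ^ (p - 1) / (x - y) ^ (p - 1) := by
    rw [hlamdef, ← Real.rpow_mul (div_pos hA hL).le,
      show (1 / q) * p = p - 1 by
        rw [div_mul_eq_mul_div, one_mul, hpq.div_conj_eq_sub_one],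
      Real.div_rpow hA.le hL.le]
  have key : (A / lam) ^ p = (x - y) ^ (p - 1) * A := by
    rw [Real.div_rpow hA.le hlam.le, hlamp, div_div_eq_mul_div, mul_comm,
      mul_div_assoc, ← Real.rpow_sub hA, show p - (p - 1) = 1 by ring,
      Real.rpow_one]
  calc ((x ^ γ - y ^ γ) / γ) ^ p ≤ (A / lam) ^ p :=
        Real.rpow_le_rpow hI0 hIle hp0.le
    _ = (x - y) ^ (p - 1) * A := key

lemma stmt1_ge (a b p β M : ℝ) (hp : 1 < p) (hβ : 1 ≤ β) (hM : 0 < M) (hab : b ≤ a) :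
    (p / (β + p - 1)) ^ p *
      |(min (max a 0) M) ^ ((β + p - 1) / p) - (min (max b 0) M) ^ ((β + p - 1) / p)| ^ p ≤
    |a - b| ^ (p - 2) * (a - b) * ((min (max a 0) M) ^ β - (min (max b 0) M) ^ β) := by
  have hp0 : (0:ℝ) < p := by linarith
  set x : ℝ := min (max a 0) M with hxdef
  set y : ℝ := min (max b 0) M with hydef
  have hy0 : 0 ≤ y := le_min (le_max_right _ _) hM.le
  have hyx : y ≤ x := min_le_min (max_le_max hab le_rfl) le_rfl
  have hlip : x - y ≤ a - b := by
    rcases le_total a 0 with h | h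
    · have : x = y := by
        rw [hxdef, hydef, max_eq_right h, max_eq_right (hab.trans h)]
      linarith
    · rcases le_total M b with h2 | h2
      · have : x = y := by
          rw [hxdef, hydef, min_eq_right, min_eq_right]
          · exact le_max_of_le_left h2
          · exact le_max_of_le_left (h2.trans hab)
        linarith
      · have hx_le : x ≤ a := min_le_of_left_le (max_le le_rfl h)
        have hy_ge : b ≤ y := by
          rcases le_total b 0 with h3 | h3
          · have : y = min 0 M := by rw [hydef, max_eq_right h3]
            rw [this, min_eq_left hM.le]; exact h3
          · rw [hydef, max_eq_left h3]; exact le_min le_rfl h2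
        linarith
  rcases eq_or_lt_of_le hyx with heq | hlt
  · rw [← heq, sub_self, sub_self, abs_zero, Real.zero_rpow hp0.ne', mul_zero, mul_zero]
  · have hab' : 0 < a - b := lt_of_lt_of_le (by linarith) hlip
    set γ : ℝ := (β + p - 1) / p with hγdef
    have hβp1 : 0 < β + p - 1 := by linarith
    have hγ0 : 0 < γ := div_pos hβp1 hp0
    have habs : |x ^ γ - y ^ γ| = x ^ γ - y ^ γ := by
      rw [abs_of_nonneg]
      have := Real.rpow_le_rpow hy0 hyx hγ0.le
      linarith
    have habs2 : |a - b| = a - b := abs_of_pos hab'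
    have hrhs : |a - b| ^ (p - 2) * (a - b) = (a - b) ^ (p - 1) := by
      rw [habs2, show p - 1 = (p - 2) + 1 by ring, Real.rpow_add hab',
        Real.rpow_one]
    have hC : (p / (β + p - 1)) ^ p * (x ^ γ - y ^ γ) ^ p
        = ((x ^ γ - y ^ γ) / γ) ^ p := by
      rw [Real.div_rpow (by have := Real.rpow_le_rpow hy0 hyx hγ0.le; linarith) hγ0.le,
        show p / (β + p - 1) = γ⁻¹ by rw [hγdef]; field_simp,
        Real.inv_rpow hγ0.le, inv_mul_eq_div]
    have hcore := core hp hβ hy0 hlt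
    have hβsub : 0 ≤ x ^ β - y ^ β := by
      have := Real.rpow_le_rpow hy0 hyx (by linarith : (0:ℝ) ≤ β)
      linarith
    have hstep : (x - y) ^ (p - 1) * ((x ^ β - y ^ β) / β)
        ≤ (a - b) ^ (p - 1) * (x ^ β - y ^ β) := by
      apply mul_le_mul
      · exact Real.rpow_le_rpow (by linarith) hlip (by linarith)
      · exact div_le_self hβsub hβ
      · exact div_nonneg hβsub (by linarith)
      · exact Real.rpow_nonneg hab'.le _
    rw [habs, hrhs, hC]
    exact hcore.trans hstep

/-- Inequality (i2): truncated version at level `M > 0`. -/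
theorem stmt1 (a b p β M : ℝ) (hp : 1 < p) (hβ : 1 ≤ β) (hM : 0 < M) :
    (p / (β + p - 1)) ^ p *
      |(min (max a 0) M) ^ ((β + p - 1) / p) - (min (max b 0) M) ^ ((β + p - 1) / p)| ^ p ≤
    |a - b| ^ (p - 2) * (a - b) * ((min (max a 0) M) ^ β - (min (max b 0) M) ^ β) := by
  rcases le_total b a with h | h
  · exact stmt1_ge a b p β M hp hβ hM h
  · have hmain := stmt1_ge b a p β M hp hβ hM h
    calc (p / (β + p - 1)) ^ p *
        |(min (max a 0) M) ^ ((β + p - 1) / p) - (min (max b 0) M) ^ ((β + p - 1) / p)| ^ p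
        = (p / (β + p - 1)) ^ p *
        |(min (max b 0) M) ^ ((β + p - 1) / p) - (min (max a 0) M) ^ ((β + p - 1) / p)| ^ p := by
          rw [abs_sub_comm]
      _ ≤ |b - a| ^ (p - 2) * (b - a) * ((min (max b 0) M) ^ β - (min (max a 0) M) ^ β) :=
          hmain
      _ = |a - b| ^ (p - 2) * (a - b) * ((min (max a 0) M) ^ β - (min (max b 0) M) ^ β) := by
          rw [abs_sub_comm]; ring
end

section
/- For all real numbers a, b, exponents p > 1 and β ≥ 1, setting C(β,p) = (p/(β+p-1))^p, one has |a-b|^{p-2}(a-b)·((b⁻)^β - (a⁻)^β) ≥ C(β,p)·|(a⁻)^{(β+p-1)/p} - (b⁻)^{(β+p-1)/p}|^p, where a⁻ = -min{a,0}. -/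
open Real

/-- Gradient inequality for `t ^ m`, `m ≥ 1`. -/
lemma grad_ineq {x y m : ℝ} (hy : 0 ≤ y) (hxy : y ≤ x) (hm : 1 ≤ m) :
    x ^ m - y ^ m ≤ m * x ^ (m - 1) * (x - y) := by
  have hx : 0 ≤ x := hy.trans hxy
  rcases hx.eq_or_lt with hx0 | hx0
  · have hy0 : y = 0 := le_antisymm (hx0 ▸ hxy) hy
    simp [← hx0, hy0]
  · have hs : -1 ≤ y / x - 1 := by
      have : 0 ≤ y / x := div_nonneg hy hx
      linarith
    have hber := one_add_mul_self_le_rpow_one_add hs hm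
    have h1 : (1 + (y / x - 1)) = y / x := by ring
    rw [h1, div_rpow hy hx] at hber
    have hxm : (0:ℝ) < x ^ m := rpow_pos_of_pos hx0 m
    have hxm1 : x ^ (m - 1) = x ^ m / x := by
      rw [rpow_sub hx0, rpow_one]
    have hber' : (1 + m * (y / x - 1)) * x ^ m ≤ y ^ m :=
      (le_div_iff₀ hxm).mp hber
    have heq : m * (x ^ m / x) * (x - y) = m * x ^ m * (1 - y / x) := by
      field_simp
    rw [hxm1, heq]
    nlinarith [hber', hxm]

/-- Lower gradient bound for `t ^ β`, `β ≥ 1`. -/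
lemma grad_ineq2 {x y β : ℝ} (hy : 0 ≤ y) (hxy : y ≤ x) (hβ : 1 ≤ β) :
    x ^ (β - 1) * (x - y) ≤ x ^ β - y ^ β := by
  have hx : 0 ≤ x := hy.trans hxy
  rcases hx.eq_or_lt with hx0 | hx0
  · have hy0 : y = 0 := le_antisymm (hx0 ▸ hxy) hy
    simp [← hx0, hy0]
  · have hxb : x ^ β = x ^ (β - 1) * x := by
      rw [← rpow_add_one (ne_of_gt hx0)]; ring_nf
    rcases hy.eq_or_lt with hy0 | hy0
    · rw [← hy0, zero_rpow (by positivity : β ≠ 0), hxb]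
      ring_nf; simp
    · have hyb : y ^ β = y ^ (β - 1) * y := by
        rw [← rpow_add_one (ne_of_gt hy0)]; ring_nf
      have hmono : y ^ (β - 1) ≤ x ^ (β - 1) :=
        rpow_le_rpow hy hxy (by linarith)
      nlinarith [hmono, hy0.le]

/-- Key power inequality. -/
lemma key_ineq {x y p β : ℝ} (hy : 0 ≤ y) (hxy : y ≤ x) (hp : 1 < p) (hβ : 1 ≤ β) :
    (p / (β + p - 1)) ^ p * (x ^ ((β + p - 1) / p) - y ^ ((β + p - 1) / p)) ^ p ≤
      (x - y) ^ (p - 1) * (x ^ β - y ^ β) := by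
  have hx : 0 ≤ x := hy.trans hxy
  have hp0 : (0:ℝ) < p := by linarith
  set m : ℝ := (β + p - 1) / p with hmdef
  have hm : 1 ≤ m := by
    rw [hmdef, le_div_iff₀ hp0]; linarith
  have hm0 : (0:ℝ) < m := by linarith
  have hC : p / (β + p - 1) = 1 / m := by
    rw [hmdef]; field_simp
  have hsum : m * p = β + p - 1 := by
    rw [hmdef]; field_simp
  rcases hxy.eq_or_lt with rfl | hlt
  · simp [zero_rpow (ne_of_gt hp0)]
  have hsub : (0:ℝ) < x - y := sub_pos.2 hlt
  have hd : 0 ≤ x ^ m - y ^ m := sub_nonneg.2 (rpow_le_rpow hy hxy hm0.le)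
  have h1 := grad_ineq hy hxy hm
  have h2 := grad_ineq2 hy hxy hβ
  have h3 : (x ^ m - y ^ m) ^ p ≤ (m * x ^ (m - 1) * (x - y)) ^ p :=
    rpow_le_rpow hd h1 hp0.le
  have h5 : (m - 1) * p = β - 1 := by rw [sub_mul, one_mul, hsum]; ring
  have h4 : (m * x ^ (m - 1) * (x - y)) ^ p
      = m ^ p * x ^ (β - 1) * (x - y) ^ p := by
    rw [mul_rpow (by positivity) hsub.le, mul_rpow hm0.le (by positivity),
      ← rpow_mul hx, h5]
  have hpp : (x - y) ^ p = (x - y) ^ (p - 1) * (x - y) := by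
    rw [← rpow_add_one (ne_of_gt hsub)]; ring_nf
  have hCm : (p / (β + p - 1)) ^ p * m ^ p = 1 := by
    rw [hC, ← mul_rpow (one_div_nonneg.2 hm0.le) hm0.le, one_div_mul_cancel (ne_of_gt hm0),
      one_rpow]
  have hC0 : (0:ℝ) ≤ (p / (β + p - 1)) ^ p := rpow_nonneg (div_nonneg hp0.le (by linarith)) p
  have hstep : (p / (β + p - 1)) ^ p * (x ^ m - y ^ m) ^ p
      ≤ x ^ (β - 1) * (x - y) ^ (p - 1) * (x - y) := by
    calc (p / (β + p - 1)) ^ p * (x ^ m - y ^ m) ^ p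
        ≤ (p / (β + p - 1)) ^ p * (m ^ p * x ^ (β - 1) * (x - y) ^ p) := by
          apply mul_le_mul_of_nonneg_left _ hC0
          rw [← h4]; exact h3
      _ = ((p / (β + p - 1)) ^ p * m ^ p) * (x ^ (β - 1) * (x - y) ^ p) := by ring
      _ = x ^ (β - 1) * (x - y) ^ p := by rw [hCm, one_mul]
      _ = x ^ (β - 1) * (x - y) ^ (p - 1) * (x - y) := by rw [hpp]; ring
  calc (p / (β + p - 1)) ^ p * (x ^ m - y ^ m) ^ p
      ≤ x ^ (β - 1) * (x - y) ^ (p - 1) * (x - y) := hstep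
    _ = (x - y) ^ (p - 1) * (x ^ (β - 1) * (x - y)) := by ring
    _ ≤ (x - y) ^ (p - 1) * (x ^ β - y ^ β) :=
        mul_le_mul_of_nonneg_left h2 (rpow_nonneg hsub.le _)

/-- Auxiliary: the statement under `b ≤ a`. -/
lemma stmt2_aux (a b p β : ℝ) (hp : 1 < p) (hβ : 1 ≤ β) (hba : b ≤ a) :
    (p / (β + p - 1)) ^ p *
      |(-min a 0) ^ ((β + p - 1) / p) - (-min b 0) ^ ((β + p - 1) / p)| ^ p ≤
    |a - b| ^ (p - 2) * (a - b) * ((-min b 0) ^ β - (-min a 0) ^ β) := by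
  have hp0 : (0:ℝ) < p := by linarith
  rcases hba.eq_or_lt with rfl | hba'
  · simp [zero_rpow (ne_of_gt hp0)]
  have hX : (0:ℝ) ≤ -min a 0 := neg_nonneg.2 (min_le_right a 0)
  have hXY : -min a 0 ≤ -min b 0 := neg_le_neg (min_le_min hba le_rfl)
  have hLip : -min b 0 - -min a 0 ≤ a - b := by
    rcases le_total a 0 with ha | ha <;> rcases le_total b 0 with hb | hb <;>
      simp [min_eq_left, min_eq_right, ha, hb] <;> linarith
  have hm0 : (0:ℝ) < (β + p - 1) / p := by
    apply div_pos (by linarith) hp0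
  have habs : |(-min a 0) ^ ((β + p - 1) / p) - (-min b 0) ^ ((β + p - 1) / p)|
      = (-min b 0) ^ ((β + p - 1) / p) - (-min a 0) ^ ((β + p - 1) / p) := by
    rw [abs_sub_comm, abs_of_nonneg (sub_nonneg.2 (rpow_le_rpow hX hXY hm0.le))]
  have hab : (0:ℝ) < a - b := sub_pos.2 hba'
  have habs2 : |a - b| ^ (p - 2) * (a - b) = (a - b) ^ (p - 1) := by
    rw [abs_of_pos hab, ← rpow_add_one (ne_of_gt hab)]; ring_nf
  rw [habs, habs2]
  have hkey := key_ineq hX hXY hp hβ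
  refine hkey.trans ?_
  apply mul_le_mul_of_nonneg_right
  · exact rpow_le_rpow (sub_nonneg.2 hXY) hLip (by linarith)
  · exact sub_nonneg.2 (rpow_le_rpow hX hXY (by linarith))

/-- Inequality (i3): negative part version, `a⁻ = -min{a,0}`. -/
theorem stmt2 (a b p β : ℝ) (hp : 1 < p) (hβ : 1 ≤ β) :
    (p / (β + p - 1)) ^ p *
      |(-min a 0) ^ ((β + p - 1) / p) - (-min b 0) ^ ((β + p - 1) / p)| ^ p ≤
    |a - b| ^ (p - 2) * (a - b) * ((-min b 0) ^ β - (-min a 0) ^ β) := by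
  rcases le_total b a with h | h
  · exact stmt2_aux a b p β hp hβ h
  · have := stmt2_aux b a p β hp hβ h
    calc (p / (β + p - 1)) ^ p *
        |(-min a 0) ^ ((β + p - 1) / p) - (-min b 0) ^ ((β + p - 1) / p)| ^ p
        = (p / (β + p - 1)) ^ p *
        |(-min b 0) ^ ((β + p - 1) / p) - (-min a 0) ^ ((β + p - 1) / p)| ^ p := by
          rw [abs_sub_comm]
      _ ≤ |b - a| ^ (p - 2) * (b - a) * ((-min a 0) ^ β - (-min b 0) ^ β) := this
      _ = |a - b| ^ (p - 2) * (a - b) * ((-min b 0) ^ β - (-min a 0) ^ β) := by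
          rw [abs_sub_comm]; ring
end

section
/- For all real numbers a, b, exponents p > 1, β ≥ 1, and M > 0, setting C(β,p) = (p/(β+p-1))^p and (a⁻)_M = min{a⁻, M} with a⁻ = -min{a,0}, one has |a-b|^{p-2}(a-b)·(((b⁻)_M)^β - ((a⁻)_M)^β) ≥ C(β,p)·|((a⁻)_M)^{(β+p-1)/p} - ((b⁻)_M)^{(β+p-1)/p}|^p. -/
/-!
For `b ≤ a` put `A = (a⁻)_M ≤ B = (b⁻)_M` and `q = (β + p - 1) / p ≥ 1`. The tangent line of
the convex function `t ↦ t ^ q` at `B` gives `(B ^ q - A ^ q) / q ≤ B ^ ((β - 1) / p) * (B - A)`;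
raising this to the power `p` leaves `(B - A) ^ (p - 1) * B ^ (β - 1) * (B - A)`, which is at most
`(B - A) ^ (p - 1) * (B ^ β - A ^ β)`. Finally `B - A ≤ a - b`, because the truncated negative
part is antitone and `1`-Lipschitz.
-/

namespace Real

theorem rpow_sub_rpow_le_mul_rpow_sub_one_mul_sub {A B q : ℝ} (hA : 0 ≤ A) (hB : 0 < B)
    (hq : 1 ≤ q) : B ^ q - A ^ q ≤ q * B ^ (q - 1) * (B - A) := by
  have bernoulli := one_add_mul_self_le_rpow_one_add (s := A / B - 1)
    (by linarith [div_nonneg hA hB.le]) hq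
  rw [add_sub_cancel, div_rpow hA hB.le, le_div_iff₀ (by positivity)] at bernoulli
  have hBq : B ^ q * (A / B - 1) = B ^ (q - 1) * (A - B) := by
    rw [rpow_sub_one hB.ne']
    field_simp
  linear_combination bernoulli - q * hBq

theorem rpow_sub_one_mul_sub_le_rpow_sub_rpow {A B β : ℝ} (hA : 0 ≤ A) (hAB : A ≤ B)
    (hβ : 1 ≤ β) : B ^ (β - 1) * (B - A) ≤ B ^ β - A ^ β := by
  have split : ∀ x : ℝ, 0 ≤ x → x ^ β = x * x ^ (β - 1) := fun x hx => by
    rw [← rpow_one_add' hx (by linarith), add_sub_cancel]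
  rw [split A hA, split B (hA.trans hAB)]
  nlinarith [rpow_le_rpow hA hAB (by linarith : 0 ≤ β - 1)]

theorem const_mul_rpow_sub_rpow_rpow_le {A B p β : ℝ} (hp : 1 < p) (hβ : 1 ≤ β) (hA : 0 ≤ A)
    (hAB : A ≤ B) :
    (p / (β + p - 1)) ^ p * (B ^ ((β + p - 1) / p) - A ^ ((β + p - 1) / p)) ^ p ≤
      (B - A) ^ (p - 1) * (B ^ β - A ^ β) := by
  rcases hAB.eq_or_lt with rfl | hAB
  · simp [zero_rpow (by linarith : p ≠ 0)]
  have hB : 0 < B := hA.trans_lt hAB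
  set q := (β + p - 1) / p
  have hq : 1 ≤ q := (one_le_div (by linarith)).mpr (by linarith)
  have hq_sub_one : q - 1 = (β - 1) / p := by
    rw [div_sub_one (by linarith)]
    ring_nf
  have hc : 0 ≤ p / (β + p - 1) := div_nonneg (by linarith) (by linarith)
  have hdiff : 0 ≤ B ^ q - A ^ q := sub_nonneg.mpr (rpow_le_rpow hA hAB.le (by linarith))
  have tangent : p / (β + p - 1) * (B ^ q - A ^ q) ≤ B ^ ((β - 1) / p) * (B - A) := by
    have := rpow_sub_rpow_le_mul_rpow_sub_one_mul_sub hA hB hq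
    rw [← hq_sub_one, ← inv_div, inv_mul_le_iff₀ (by linarith)]
    linarith
  calc (p / (β + p - 1)) ^ p * (B ^ q - A ^ q) ^ p
      = (p / (β + p - 1) * (B ^ q - A ^ q)) ^ p := (mul_rpow hc hdiff).symm
    _ ≤ (B ^ ((β - 1) / p) * (B - A)) ^ p :=
      rpow_le_rpow (mul_nonneg hc hdiff) tangent (by linarith)
    _ = (B - A) ^ (p - 1) * (B ^ (β - 1) * (B - A)) := by
      have hpow : (B - A) ^ p = (B - A) ^ (p - 1) * (B - A) := by
        rw [← rpow_add_one' (by linarith) (by linarith), sub_add_cancel]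
      rw [mul_rpow (by positivity) (by linarith), ← rpow_mul hB.le, div_mul_cancel₀ _ (by linarith),
        hpow]
      ring
    _ ≤ (B - A) ^ (p - 1) * (B ^ β - A ^ β) :=
      mul_le_mul_of_nonneg_left (rpow_sub_one_mul_sub_le_rpow_sub_rpow hA hAB.le hβ)
        (rpow_nonneg (by linarith) _)

theorem abs_rpow_sub_two_mul_self {x p : ℝ} (hx : 0 ≤ x) (hp : p ≠ 1) :
    |x| ^ (p - 2) * x = x ^ (p - 1) := by
  rw [abs_of_nonneg hx, ← rpow_add_one' hx (by contrapose! hp; linarith)]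
  ring_nf

end Real

open Real

/-- The truncated negative part `(a⁻)_M`. -/
def truncNeg (M a : ℝ) : ℝ := min (-min a 0) M

theorem truncNeg_nonneg {M : ℝ} (hM : 0 ≤ M) (a : ℝ) : 0 ≤ truncNeg M a :=
  le_min (neg_nonneg.mpr (min_le_right a 0)) hM

theorem truncNeg_antitone (M : ℝ) : Antitone (truncNeg M) := fun _ _ hab =>
  min_le_min_right M (neg_le_neg (min_le_min_right 0 hab))

theorem truncNeg_sub_truncNeg_le {M a b : ℝ} (hba : b ≤ a) :
    truncNeg M b - truncNeg M a ≤ a - b := by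
  unfold truncNeg
  simp only [min_def]
  split_ifs <;> linarith

/-- Inequality (i4): truncated negative part version at level `M > 0`. -/
theorem stmt3 (a b p β M : ℝ) (hp : 1 < p) (hβ : 1 ≤ β) (hM : 0 < M) :
    (p / (β + p - 1)) ^ p *
      |(min (-min a 0) M) ^ ((β + p - 1) / p) - (min (-min b 0) M) ^ ((β + p - 1) / p)| ^ p ≤
    |a - b| ^ (p - 2) * (a - b) * ((min (-min b 0) M) ^ β - (min (-min a 0) M) ^ β) := by
  change _ * |truncNeg M a ^ _ - truncNeg M b ^ _| ^ p ≤ _ * (truncNeg M b ^ β - truncNeg M a ^ β)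
  wlog hba : b ≤ a generalizing a b
  · -- both sides are symmetric in `a` and `b`
    have := this b a (le_of_not_ge hba)
    rw [abs_sub_comm b a, abs_sub_comm (truncNeg M b ^ _)] at this
    linarith
  have hq : 0 ≤ (β + p - 1) / p := div_nonneg (by linarith) (by linarith)
  have hA := truncNeg_nonneg hM.le a
  have hAB := truncNeg_antitone M hba
  rw [abs_sub_comm, abs_of_nonneg (sub_nonneg.mpr (rpow_le_rpow hA hAB hq)),
    abs_rpow_sub_two_mul_self (sub_nonneg.mpr hba) hp.ne']
  refine (const_mul_rpow_sub_rpow_rpow_le hp hβ hA hAB).trans ?_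
  exact mul_le_mul_of_nonneg_right
    (rpow_le_rpow (sub_nonneg.mpr hAB) (truncNeg_sub_truncNeg_le hba) (by linarith))
    (sub_nonneg.mpr (rpow_le_rpow hA hAB (by linarith)))
end

section
/- Let a > 0, ϑ > p > 1, and define f_a : ℝ → ℝ by f_a(t) = f(t) - a for t ≥ 0, f_a(t) = -a(t+1) for t ∈ [-1,0], f_a(t) = 0 for t ≤ -1, where f : [0,∞) → [0,∞) is continuous with f(0)=0 and satisfies ϑF(t) ≤ t f(t) for t > t₀ (F the primitive of f). Let F_a be defined by F_a(t) = F(t) - at for t ≥ 0, F_a(t) = -at²/2 - at for t ∈ [-1,0], F_a(t) = a/2 for t ≤ -1. Then for every ã > 0 there exists M₃ > 0, depending only on f, ϑ, t₀, ã (and not on a or t), such that ϑ·F_a(t) ≤ t·f_a(t) + M₃ for all t ∈ ℝ and all a ∈ (0, ã). -/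
/-- Uniform (in `a`) Ambrosetti–Rabinowitz condition for the truncated
nonlinearity `f_a` and its primitive `F_a`: for every `aUp > 0` there is `M₃ > 0`
with `ϑ F_a(t) ≤ t f_a(t) + M₃` for all `t ∈ ℝ` and `a ∈ (0, aUp)`. -/
theorem stmt11 (p ϑ t₀ : ℝ) (hp : 1 < p) (hϑ : p < ϑ) (ht₀ : 0 < t₀)
    (f : ℝ → ℝ) (hf_cont : ContinuousOn f (Set.Ici 0)) (hf0 : f 0 = 0)
    (hf_nonneg : ∀ t ≥ (0:ℝ), 0 ≤ f t)
    (hAR : ∀ t > t₀, 0 < ϑ * ∫ τ in (0:ℝ)..t, f τ ∧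
      ϑ * ∫ τ in (0:ℝ)..t, f τ ≤ t * f t)
    (fa Fa : ℝ → ℝ → ℝ)
    (hfa1 : ∀ a t, 0 ≤ t → fa a t = f t - a)
    (hfa2 : ∀ a t, -1 ≤ t → t ≤ 0 → fa a t = -a * (t + 1))
    (hfa3 : ∀ a t, t ≤ -1 → fa a t = 0)
    (hFa1 : ∀ a t, 0 ≤ t → Fa a t = (∫ τ in (0:ℝ)..t, f τ) - a * t)
    (hFa2 : ∀ a t, -1 ≤ t → t ≤ 0 → Fa a t = -a * t ^ 2 / 2 - a * t)
    (hFa3 : ∀ a t, t ≤ -1 → Fa a t = a / 2) :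
    ∀ aUp > 0, ∃ M₃ > 0, ∀ a ∈ Set.Ioo (0:ℝ) aUp, ∀ t : ℝ,
      ϑ * Fa a t ≤ t * fa a t + M₃ := by
  intro aUp haUp
  have hϑ1 : (1:ℝ) < ϑ := hp.trans hϑ
  have hϑ0 : (0:ℝ) < ϑ := lt_trans one_pos hϑ1
  obtain ⟨x₀, hx₀, hC⟩ := (isCompact_Icc (a := (0:ℝ)) (b := t₀)).exists_isMaxOn
    ⟨0, le_refl 0, ht₀.le⟩ (hf_cont.mono (fun x hx => hx.1))
  set C := f x₀ with hCdef
  have hC0 : 0 ≤ C := hf0 ▸ hC (⟨le_refl 0, ht₀.le⟩ : (0:ℝ) ∈ Set.Icc 0 t₀)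
  refine ⟨ϑ * t₀ * C + 2 * ϑ * aUp + 2 * aUp + 1, by positivity, ?_⟩
  rintro a ⟨ha0, haA⟩ t
  rcases le_or_gt 0 t with ht | ht
  · rw [hfa1 a t ht, hFa1 a t ht]
    rcases le_or_gt t t₀ with htt | htt
    · have hint : IntervalIntegrable f MeasureTheory.volume 0 t := by
        apply ContinuousOn.intervalIntegrable
        apply hf_cont.mono
        rw [Set.uIcc_of_le ht]
        exact fun x hx => hx.1
      have hF : ∫ τ in (0:ℝ)..t, f τ ≤ C * t := by
        calc ∫ τ in (0:ℝ)..t, f τ ≤ ∫ _ in (0:ℝ)..t, C := by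
              apply intervalIntegral.integral_mono_on ht hint intervalIntegrable_const
              intro x hx
              exact hC ⟨hx.1, hx.2.trans htt⟩
          _ = C * t := by simp [mul_comm]
      have htf : 0 ≤ t * f t := mul_nonneg ht (hf_nonneg t ht)
      nlinarith [mul_nonneg ha0.le ht, mul_nonneg hC0 (sub_nonneg.2 htt),
        mul_pos hϑ0 haUp, mul_nonneg (mul_nonneg hϑ0.le ht) hC0]
    · have hAR' := (hAR t htt).2
      nlinarith [mul_nonneg ha0.le ht, mul_pos hϑ0 haUp,
        mul_nonneg (mul_nonneg hϑ0.le ht₀.le) hC0, haUp]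
  · rcases le_or_gt (-1) t with ht1 | ht1
    · rw [hfa2 a t ht1 ht.le, hFa2 a t ht1 ht.le]
      nlinarith [sq_nonneg t, sq_nonneg (t+1), mul_pos ha0 haUp.lt, -- dummy
        mul_nonneg (mul_nonneg hϑ0.le ht₀.le) hC0,
        mul_nonneg ha0.le (neg_nonneg.2 ht.le),
        mul_nonneg (mul_nonneg ha0.le (neg_nonneg.2 ht.le)) (neg_nonneg.2 ht.le),
        mul_pos hϑ0 haUp, mul_lt_mul_of_pos_left haA hϑ0,
        mul_nonneg ha0.le (sq_nonneg t), mul_nonneg ha0.le (sq_nonneg (t+1)),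
        mul_nonneg (mul_nonneg hϑ0.le ha0.le) (sq_nonneg t)]
    · rw [hfa3 a t ht1.le, hFa3 a t ht1.le]
      nlinarith [mul_lt_mul_of_pos_left haA hϑ0,
        mul_nonneg (mul_nonneg hϑ0.le ht₀.le) hC0, haUp, mul_pos hϑ0 haUp]
end
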